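/- Let G be a digraph with SCC partition 𝒮 and a labeling π: 𝒮 → ℕ such that the intervals [π(S), π(S)+|S|-1] partition [1,n] and paths between distinct SCCs respect π (π increases along condensation edges). If deleting an edge splits an SCC S into SCCs S₁,...,S_k (topologically sorted within the new condensation restricted to {S₁,...,S_k}), and we assign π(S₁) := π(S) and π(S_i) := π(S_{i-1}) + |S_{i-1}| for i ≥ 2, then the new labeling again satisfies: the intervals [π(S_i), π(S_i)+|S_i|-1] partition [π(S), π(S)+|S|-1], all new intervals together partition [1,n], and π increases along every edge of the new condensation. -/

import Mathlib

open Classical in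
private lemma sconn_card_helper {V : Type*} [Fintype V] (p : V → Prop) :
    Nat.card {w | p w} = (Finset.univ.filter p).card := by
  simp [Nat.card_eq_fintype_card, Fintype.card_subtype]

private lemma biUnion_Icc_consec (b : ℕ → ℕ) :
    ∀ k, 1 ≤ k → (∀ i j, i ≤ j → b i ≤ b j) → (∀ i, i < k → b i < b (i+1)) →
      (Finset.range k).biUnion (fun i => Finset.Icc (b i) (b (i+1) - 1))
        = Finset.Icc (b 0) (b k - 1) := by
  intro k
  induction k with
  | zero => omega
  | succ k ih =>
    intro _ hmono hb
    rcases Nat.eq_zero_or_pos k with h0 | hpos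
    · subst h0; simp
    · rw [Finset.range_add_one, Finset.biUnion_insert,
        ih hpos hmono (fun i hi => hb i (by omega))]
      have h1 : b 0 < b k := lt_of_lt_of_le (hb 0 (by omega)) (hmono 1 k hpos)
      have h2 : b k < b (k+1) := hb k (by omega)
      ext m
      simp only [Finset.mem_union, Finset.mem_Icc]
      omega


/-- Two vertices are strongly connected: each reaches the other. -/
def SConn {V : Type*} (E : V → V → Prop) (u v : V) : Prop :=
  Relation.ReflTransGen E u v ∧ Relation.ReflTransGen E v u

/-- maintaining topological labels under an edge deletion. A labeling
`π` is given per vertex (constant on SCCs), increasing along paths between distinct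
SCCs, and such that the intervals `[π v, π v + |SCC(v)| - 1]` partition `[1,n]`.
An edge `(da,db)` inside the SCC `S` of `s0` is deleted (all other SCCs unchanged);
`S` splits into the new SCCs of `r 0, …, r (k-1)`, topologically sorted. The new
labeling `π'` keeps labels outside `S`, is constant on new SCCs, and satisfies
`π' (r 0) = π s0` and `π' (r (i+1)) = π' (r i) + |SCC'(r i)|`. Then: the new intervals
of `S`'s fragments partition `S`'s old interval, all new intervals partition `[1,n]`,
and `π'` increases along every path between distinct new SCCs. -/
theorem topological_labels_after_split
    {V : Type*} [Fintype V]
    (n : ℕ) (E E' : V → V → Prop) (da db : V)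
    (hdel : ∀ x y, E' x y ↔ (E x y ∧ ¬(x = da ∧ y = db)))
    (π : V → ℕ)
    (hconst : ∀ x y, SConn E x y → π x = π y)
    (hmono : ∀ x y, ¬ SConn E x y → Relation.ReflTransGen E x y → π x < π y)
    (hdisj : ∀ x y, ¬ SConn E x y →
      Disjoint (Finset.Icc (π x) (π x + Nat.card {w | SConn E x w} - 1))
               (Finset.Icc (π y) (π y + Nat.card {w | SConn E y w} - 1)))
    (hcover : Finset.univ.biUnion
        (fun v => Finset.Icc (π v) (π v + Nat.card {w | SConn E v w} - 1))
      = Finset.Icc 1 n)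
    (s0 : V) (hda : SConn E da s0) (hdb : SConn E db s0)
    (k : ℕ) (hk : 1 ≤ k) (r : ℕ → V)
    (hrS : ∀ i < k, SConn E (r i) s0)
    (hrepr : ∀ v : V, SConn E v s0 ↔ ∃ i < k, SConn E' v (r i))
    (hrdist : ∀ i < k, ∀ j < k, i ≠ j → ¬ SConn E' (r i) (r j))
    (hsorted : ∀ i < k, ∀ j < k, i < j → ¬ Relation.ReflTransGen E' (r j) (r i))
    (hunchanged : ∀ v w : V, ¬ SConn E v s0 → (SConn E v w ↔ SConn E' v w))
    (π' : V → ℕ)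
    (hout : ∀ v, ¬ SConn E v s0 → π' v = π v)
    (hconst' : ∀ v w, SConn E' v w → π' v = π' w)
    (hfirst : π' (r 0) = π s0)
    (hrec : ∀ i, i + 1 < k → π' (r (i+1)) = π' (r i) + Nat.card {w | SConn E' (r i) w}) :
    ((∀ i < k, ∀ j < k, i ≠ j →
        Disjoint (Finset.Icc (π' (r i)) (π' (r i) + Nat.card {w | SConn E' (r i) w} - 1))
                 (Finset.Icc (π' (r j)) (π' (r j) + Nat.card {w | SConn E' (r j) w} - 1))) ∧
      (Finset.range k).biUnion
          (fun i => Finset.Icc (π' (r i)) (π' (r i) + Nat.card {w | SConn E' (r i) w} - 1))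
        = Finset.Icc (π s0) (π s0 + Nat.card {w | SConn E s0 w} - 1)) ∧
    ((∀ x y : V, ¬ SConn E' x y →
        Disjoint (Finset.Icc (π' x) (π' x + Nat.card {w | SConn E' x w} - 1))
                 (Finset.Icc (π' y) (π' y + Nat.card {w | SConn E' y w} - 1))) ∧
      Finset.univ.biUnion
          (fun v => Finset.Icc (π' v) (π' v + Nat.card {w | SConn E' v w} - 1))
        = Finset.Icc 1 n) ∧
    (∀ x y : V, ¬ SConn E' x y → Relation.ReflTransGen E' x y → π' x < π' y) := by
  classical
  have hE'E : ∀ {x y : V}, Relation.ReflTransGen E' x y → Relation.ReflTransGen E x y :=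
    fun h => Relation.ReflTransGen.mono (fun a b hab => ((hdel a b).1 hab).1) _ _ h
  have srefl : ∀ (F : V → V → Prop) (x : V), SConn F x x :=
    fun _ _ => ⟨Relation.ReflTransGen.refl, Relation.ReflTransGen.refl⟩
  have ssymm : ∀ {F : V → V → Prop} {x y : V}, SConn F x y → SConn F y x := fun h => ⟨h.2, h.1⟩
  have strans : ∀ {F : V → V → Prop} {x y z : V}, SConn F x y → SConn F y z → SConn F x z :=
    fun h h' => ⟨h.1.trans h'.1, h'.2.trans h.2⟩
  have hSC : ∀ {x y : V}, SConn E' x y → SConn E x y := fun h => ⟨hE'E h.1, hE'E h.2⟩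
  set C : ℕ → Finset V := fun i => Finset.univ.filter (fun w => SConn E' (r i) w) with hCdef
  set c : ℕ → ℕ := fun i => (C i).card with hcdef
  have hcardC : ∀ i, Nat.card {w | SConn E' (r i) w} = c i := fun i => sconn_card_helper _
  set S : Finset V := Finset.univ.filter (fun w => SConn E s0 w) with hSdef
  have hcardS : Nat.card {w | SConn E s0 w} = S.card := sconn_card_helper _
  have hrC : ∀ i, r i ∈ C i := fun i => by simp [hCdef, srefl]
  have hcpos : ∀ i, 1 ≤ c i := fun i => Finset.card_pos.mpr ⟨r i, hrC i⟩
  have hSdisjC : ∀ i < k, ∀ j < k, i ≠ j → Disjoint (C i) (C j) := by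
    intro i hi j hj hij
    rw [Finset.disjoint_left]
    intro w hwi hwj
    simp only [hCdef, Finset.mem_filter] at hwi hwj
    exact hrdist i hi j hj hij (strans hwi.2 (ssymm hwj.2))
  have hSeq : S = (Finset.range k).biUnion C := by
    ext w
    simp only [hSdef, hCdef, Finset.mem_filter, Finset.mem_biUnion, Finset.mem_range,
      Finset.mem_univ, true_and]
    constructor
    · intro hw
      obtain ⟨i, hi, hwi⟩ := (hrepr w).1 (ssymm hw)
      exact ⟨i, hi, ssymm hwi⟩
    · rintro ⟨i, hi, hwi⟩
      exact strans (ssymm (hrS i hi)) (hSC hwi)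
  have hsum : S.card = ∑ i ∈ Finset.range k, c i := by
    rw [hSeq, Finset.card_biUnion]
    intro i hi j hj hij
    exact hSdisjC i (Finset.mem_range.1 hi) j (Finset.mem_range.1 hj) hij
  set b : ℕ → ℕ := fun i => π s0 + ∑ j ∈ Finset.range i, c j with hbdef
  have hbmono : ∀ i j, i ≤ j → b i ≤ b j := by
    intro i j hij
    simp only [hbdef]
    exact Nat.add_le_add_left (Finset.sum_le_sum_of_subset (Finset.range_subset_range.2 hij)) _
  have hbstep : ∀ i, b (i+1) = b i + c i := by
    intro i; simp [hbdef, Finset.sum_range_succ, Nat.add_assoc]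
  have hb0 : b 0 = π s0 := by simp [hbdef]
  have hblt : ∀ i, b i < b (i+1) := fun i => by rw [hbstep]; have := hcpos i; omega
  have hbk : b k = π s0 + S.card := by rw [hbdef, hsum]
  have hπ'r : ∀ i < k, π' (r i) = b i := by
    intro i
    induction i with
    | zero => intro _; rw [hfirst, hb0]
    | succ i ih =>
      intro hi
      rw [hrec i hi, ih (by omega), hcardC, hbstep]
  have hIr : ∀ i < k, Finset.Icc (π' (r i)) (π' (r i) + Nat.card {w | SConn E' (r i) w} - 1)
      = Finset.Icc (b i) (b (i+1) - 1) := by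
    intro i hi
    rw [hπ'r i hi, hcardC, hbstep]
  have goal1a : ∀ i < k, ∀ j < k, i ≠ j →
      Disjoint (Finset.Icc (π' (r i)) (π' (r i) + Nat.card {w | SConn E' (r i) w} - 1))
               (Finset.Icc (π' (r j)) (π' (r j) + Nat.card {w | SConn E' (r j) w} - 1)) := by
    have key : ∀ i < k, ∀ j < k, i < j →
        Disjoint (Finset.Icc (b i) (b (i+1) - 1)) (Finset.Icc (b j) (b (j+1) - 1)) := by
      intro i hi j hj hij
      rw [Finset.disjoint_left]
      intro m hm1 hm2
      simp only [Finset.mem_Icc] at hm1 hm2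
      have h1 := hbstep i
      have h2 := hbmono (i+1) j hij
      have h3 := hcpos i
      omega
    intro i hi j hj hij
    rw [hIr i hi, hIr j hj]
    rcases lt_or_gt_of_ne hij with h | h
    · exact key i hi j hj h
    · exact (key j hj i hi h).symm
  have goal1b : (Finset.range k).biUnion
        (fun i => Finset.Icc (π' (r i)) (π' (r i) + Nat.card {w | SConn E' (r i) w} - 1))
      = Finset.Icc (π s0) (π s0 + Nat.card {w | SConn E s0 w} - 1) := by
    rw [Finset.biUnion_congr rfl (fun i hi => hIr i (Finset.mem_range.1 hi)),
      biUnion_Icc_consec b k hk hbmono (fun i _ => hblt i), hb0, hcardS, hbk]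
  have hclassout : ∀ v, ¬ SConn E v s0 → {w | SConn E' v w} = {w | SConn E v w} := by
    intro v hv
    ext w
    simp only [Set.mem_setOf_eq]
    exact (hunchanged v w hv).symm
  have hIout : ∀ v, ¬ SConn E v s0 →
      Finset.Icc (π' v) (π' v + Nat.card {w | SConn E' v w} - 1)
        = Finset.Icc (π v) (π v + Nat.card {w | SConn E v w} - 1) := by
    intro v hv
    rw [hout v hv, hclassout v hv]
  have hclassin : ∀ v : V, ∀ i, SConn E' v (r i) →
      {w | SConn E' v w} = {w | SConn E' (r i) w} := by
    intro v i hv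
    ext w
    simp only [Set.mem_setOf_eq]
    exact ⟨fun h => strans (ssymm hv) h, fun h => strans hv h⟩
  have hIin : ∀ v : V, ∀ i, SConn E' v (r i) →
      Finset.Icc (π' v) (π' v + Nat.card {w | SConn E' v w} - 1)
        = Finset.Icc (π' (r i)) (π' (r i) + Nat.card {w | SConn E' (r i) w} - 1) := by
    intro v i hv
    rw [hconst' v (r i) hv, hclassin v i hv]
  have hclassS : ∀ v : V, SConn E v s0 → {w | SConn E v w} = {w | SConn E s0 w} := by
    intro v hv
    ext w
    simp only [Set.mem_setOf_eq]
    exact ⟨fun h => strans (ssymm hv) h, fun h => strans hv h⟩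
  have hIclassold : ∀ v : V, SConn E v s0 →
      Finset.Icc (π v) (π v + Nat.card {w | SConn E v w} - 1)
        = Finset.Icc (π s0) (π s0 + Nat.card {w | SConn E s0 w} - 1) := by
    intro v hv
    rw [hconst v s0 hv, hclassS v hv]
  have hIrsub : ∀ i < k, Finset.Icc (π' (r i)) (π' (r i) + Nat.card {w | SConn E' (r i) w} - 1)
      ⊆ Finset.Icc (π s0) (π s0 + Nat.card {w | SConn E s0 w} - 1) := by
    intro i hi
    rw [← goal1b]
    exact Finset.subset_biUnion_of_mem (fun i => Finset.Icc (π' (r i)) (π' (r i) + Nat.card {w | SConn E' (r i) w} - 1)) (Finset.mem_range.2 hi)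
  have goal2a : ∀ x y : V, ¬ SConn E' x y →
      Disjoint (Finset.Icc (π' x) (π' x + Nat.card {w | SConn E' x w} - 1))
               (Finset.Icc (π' y) (π' y + Nat.card {w | SConn E' y w} - 1)) := by
    intro x y hxy
    by_cases hx : SConn E x s0 <;> by_cases hy : SConn E y s0
    · obtain ⟨i, hi, hxi⟩ := (hrepr x).1 hx
      obtain ⟨j, hj, hyj⟩ := (hrepr y).1 hy
      have hij : i ≠ j := by rintro rfl; exact hxy (strans hxi (ssymm hyj))
      rw [hIin x i hxi, hIin y j hyj]
      exact goal1a i hi j hj hij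
    · obtain ⟨i, hi, hxi⟩ := (hrepr x).1 hx
      rw [hIin x i hxi, hIout y hy]
      exact (hdisj y s0 hy).symm.mono_left (hIrsub i hi)
    · obtain ⟨j, hj, hyj⟩ := (hrepr y).1 hy
      rw [hIout x hx, hIin y j hyj]
      exact (hdisj x s0 hx).mono_right (hIrsub j hj)
    · have hxy' : ¬ SConn E x y := fun h => hxy ((hunchanged x y hx).1 h)
      rw [hIout x hx, hIout y hy]
      exact hdisj x y hxy'
  have goal2b : Finset.univ.biUnion
        (fun v => Finset.Icc (π' v) (π' v + Nat.card {w | SConn E' v w} - 1))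
      = Finset.Icc 1 n := by
    rw [← hcover]
    ext m
    simp only [Finset.mem_biUnion, Finset.mem_univ, true_and]
    constructor
    · rintro ⟨v, hv⟩
      by_cases hvs : SConn E v s0
      · obtain ⟨i, hi, hvi⟩ := (hrepr v).1 hvs
        rw [hIin v i hvi] at hv
        exact ⟨s0, hIrsub i hi hv⟩
      · rw [hIout v hvs] at hv
        exact ⟨v, hv⟩
    · rintro ⟨v, hv⟩
      by_cases hvs : SConn E v s0
      · rw [hIclassold v hvs, ← goal1b] at hv
        obtain ⟨i, hi, hmi⟩ := Finset.mem_biUnion.1 hv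
        exact ⟨r i, hmi⟩
      · rw [← hIout v hvs] at hv
        exact ⟨v, hv⟩
  have hcEpos : ∀ v : V, 1 ≤ Nat.card {w | SConn E v w} := by
    intro v
    rw [sconn_card_helper]
    exact Finset.card_pos.mpr ⟨v, by simp [srefl]⟩
  have goal3 : ∀ x y : V, ¬ SConn E' x y → Relation.ReflTransGen E' x y → π' x < π' y := by
    intro x y hxy hp
    by_cases hExy : SConn E x y
    · have hx : SConn E x s0 := by
        by_contra hx
        exact hxy ((hunchanged x y hx).1 hExy)
      have hy : SConn E y s0 := strans (ssymm hExy) hx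
      obtain ⟨i, hi, hxi⟩ := (hrepr x).1 hx
      obtain ⟨j, hj, hyj⟩ := (hrepr y).1 hy
      have hpij : Relation.ReflTransGen E' (r i) (r j) := (hxi.2.trans hp).trans hyj.1
      have hij : i ≠ j := by rintro rfl; exact hxy (strans hxi (ssymm hyj))
      have hlt : i < j := by
        rcases lt_or_gt_of_ne hij with h | h
        · exact h
        · exact absurd hpij (hsorted j hj i hi h)
      rw [hconst' x (r i) hxi, hconst' y (r j) hyj, hπ'r i hi, hπ'r j hj]
      calc b i < b (i+1) := hblt i
        _ ≤ b j := hbmono (i+1) j hlt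
    · have hππ : π x < π y := hmono x y hExy (hE'E hp)
      have hsep : π x + Nat.card {w | SConn E x w} - 1 < π y := by
        by_contra hcon
        push_neg at hcon
        have h1 : π y ∈ Finset.Icc (π x) (π x + Nat.card {w | SConn E x w} - 1) :=
          Finset.mem_Icc.2 ⟨le_of_lt hππ, hcon⟩
        have h2 : π y ∈ Finset.Icc (π y) (π y + Nat.card {w | SConn E y w} - 1) :=
          Finset.mem_Icc.2 ⟨le_refl _, by have := hcEpos y; omega⟩
        exact Finset.disjoint_left.1 (hdisj x y hExy) h1 h2
      have hxub : π' x ≤ π x + Nat.card {w | SConn E x w} - 1 := by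
        by_cases hxs : SConn E x s0
        · obtain ⟨i, hi, hxi⟩ := (hrepr x).1 hxs
          have e2 : Nat.card {w | SConn E x w} = S.card := by rw [hclassS x hxs, hcardS]
          rw [hconst' x (r i) hxi, hπ'r i hi, hconst x s0 hxs, e2]
          have h1 : b (i+1) ≤ b k := hbmono (i+1) k hi
          have h2 := hbstep i
          have h3 := hcpos i
          have h4 := hbk
          omega
        · rw [hout x hxs]
          have := hcEpos x
          omega
      have hylb : π y ≤ π' y := by
        by_cases hys : SConn E y s0
        · obtain ⟨j, hj, hyj⟩ := (hrepr y).1 hys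
          rw [hconst' y (r j) hyj, hπ'r j hj, hconst y s0 hys]
          have h1 := hbmono 0 j (Nat.zero_le j)
          omega
        · rw [hout y hys]
      omega
  exact ⟨⟨goal1a, goal1b⟩, ⟨goal2a, goal2b⟩, goal3⟩
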